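/- Upper bound on the smoothed class probability at a perturbed input (case ψ ≤ ψ̃): Let x, x̃ ∈ X, let z★ be a longest common subsequence of x and x̃ with L := |z★|, let ψ, ψ̃ ∈ (0,1) with ψ ≤ ψ̃, let f̄ : X → Y be any base classifier and y ∈ Y. Set μ := p_y(x; f̄, ψ) and let H★ := min{ H ∈ {0,…,L} : Σ_{i=0}^{H} B(L, ψ, i) ≥ μ } (this set is nonempty since Σ_{i=0}^{L} B(L, ψ, i) = 1 ≥ μ). Then p_y(x̃; f̄, ψ̃) ≤ (ψ̃^{|x̃|−L} / ψ^{|x|−L}) · ( Σ_{i=0}^{H★−1} B(L, ψ̃, i) + B(L, ψ̃, H★) · ⌈ (μ − Σ_{j=0}^{H★−1} B(L, ψ, j)) / B(L, ψ, H★) ⌉_{C(L,H★)^{−1}} ) + 1 − ψ̃^{|x̃|−L}. -/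

import Mathlib

/-- Apply a deletion indicator: keep the tokens at positions `i` with `ε i = true`, in order. -/
def applyDel {Ω : Type*} (x : List Ω) (ε : Fin x.length → Bool) : List Ω :=
  (List.finRange x.length).filterMap fun i => if ε i then some (x.get i) else none

/-- Number of retained tokens `|ε|`. -/
def retained {n : ℕ} (ε : Fin n → Bool) : ℕ :=
  (Finset.univ.filter fun i => ε i = true).card

/-- `q_ψ(ε|x) = ψ^{|x|-|ε|} (1-ψ)^{|ε|}`. -/
noncomputable def qdel {Ω : Type*} (ψ : ℝ) (x : List Ω) (ε : Fin x.length → Bool) : ℝ :=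
  ψ ^ (x.length - retained ε) * (1 - ψ) ^ (retained ε)

/-- The score `s_{f̄,ψ}(ε, x) = q_ψ(ε|x)·1[f̄(apply(x,ε)) = y]`. -/
noncomputable def score {Ω Y : Type*} [DecidableEq Y] (f : List Ω → Y) (y : Y) (ψ : ℝ)
    (x : List Ω) (ε : Fin x.length → Bool) : ℝ :=
  qdel ψ x ε * (if f (applyDel x ε) = y then 1 else 0)

/-- The smoothed class probability `p_y(x; f̄, ψ) = Σ_{ε ∈ E(x)} s_{f̄,ψ}(ε, x)`. -/
noncomputable def smoothedProb {Ω Y : Type*} [DecidableEq Y] (f : List Ω → Y) (y : Y)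
    (ψ : ℝ) (x : List Ω) : ℝ :=
  ∑ ε : Fin x.length → Bool, score f y ψ x ε

/-- `z` is a longest common subsequence of `x` and `x̃`. -/
def IsLCS {Ω : Type*} (z x xt : List Ω) : Prop :=
  z.Sublist x ∧ z.Sublist xt ∧ ∀ w : List Ω, w.Sublist x → w.Sublist xt → w.length ≤ z.length

/-- The binomial pmf `B(n, p, k) = C(n,k)·(1−p)^k·p^{n−k}`. -/
noncomputable def binomPMF (n : ℕ) (p : ℝ) (k : ℕ) : ℝ :=
  (n.choose k : ℝ) * (1 - p) ^ k * p ^ (n - k)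

/-- Gridded floor `⌊a⌋_v = v·⌊a/v⌋`. -/
noncomputable def gfloor (a v : ℝ) : ℝ := v * (⌊a / v⌋ : ℤ)

/-- Gridded ceiling `⌈a⌉_v = v·⌈a/v⌉`. -/
noncomputable def gceil (a v : ℝ) : ℝ := v * (⌈a / v⌉ : ℤ)

private lemma retained_le' {n : ℕ} (ε : Fin n → Bool) : retained ε ≤ n := by
  calc retained ε ≤ (Finset.univ : Finset (Fin n)).card := Finset.card_filter_le _ _
    _ = n := by simp

private lemma qdel_nonneg {Ω : Type*} {ψ : ℝ} (hψ : ψ ∈ Set.Ioo (0:ℝ) 1) (x : List Ω)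
    (ε : Fin x.length → Bool) : 0 ≤ qdel ψ x ε := by
  obtain ⟨h0, h1⟩ := hψ
  have h2 : (0:ℝ) ≤ 1 - ψ := by linarith
  exact mul_nonneg (pow_nonneg h0.le _) (pow_nonneg h2 _)

private lemma score_nonneg {Ω Y : Type*} [DecidableEq Y] (f : List Ω → Y) (y : Y) {ψ : ℝ}
    (hψ : ψ ∈ Set.Ioo (0:ℝ) 1) (x : List Ω) (ε : Fin x.length → Bool) :
    0 ≤ score f y ψ x ε := by
  unfold score
  refine mul_nonneg (qdel_nonneg hψ x ε) ?_
  split <;> norm_num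

private lemma score_le_qdel {Ω Y : Type*} [DecidableEq Y] (f : List Ω → Y) (y : Y) {ψ : ℝ}
    (hψ : ψ ∈ Set.Ioo (0:ℝ) 1) (x : List Ω) (ε : Fin x.length → Bool) :
    score f y ψ x ε ≤ qdel ψ x ε := by
  unfold score
  have := qdel_nonneg hψ x ε
  split <;> simp [this]

private lemma filterMap_ite {α β : Type*} (g : α → β) (p : α → Bool) (l : List α) :
    (l.filterMap fun i => if p i then some (g i) else none) = (l.filter p).map g := by
  induction l with
  | nil => simp
  | cons a l ih => by_cases h : p a <;> simp [List.filterMap_cons, List.filter_cons, h, ih]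

private lemma applyDel_eq_map {Ω : Type*} (x : List Ω) (ε : Fin x.length → Bool) :
    applyDel x ε = ((List.finRange x.length).filter fun i => ε i).map x.get := by
  unfold applyDel
  exact filterMap_ite _ _ _
private lemma card_retained (n k : ℕ) :
    ((Finset.univ.filter fun δ : Fin n → Bool => retained δ = k).card) = n.choose k := by
  classical
  have h : ((Finset.univ.filter fun δ : Fin n → Bool => retained δ = k).card)
      = (Finset.powersetCard k (Finset.univ : Finset (Fin n))).card := by
    refine Finset.card_nbij' (fun δ => Finset.univ.filter fun i => δ i = true)
      (fun s => fun i => decide (i ∈ s)) ?_ ?_ ?_ ?_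
    · intro δ hδ
      simp only [Finset.mem_coe, Finset.mem_filter, Finset.mem_univ, true_and] at hδ
      simp only [Finset.mem_coe, Finset.mem_powersetCard]
      exact ⟨Finset.filter_subset _ _, hδ⟩
    · intro s hs
      simp only [Finset.mem_coe, Finset.mem_powersetCard] at hs
      simp only [Finset.mem_coe, Finset.mem_filter, Finset.mem_univ, true_and]
      simp only [retained]
      rw [show (Finset.univ.filter fun i => decide (i ∈ s) = true) = s by ext i; simp]
      exact hs.2
    · intro δ _
      funext i
      simp
    · intro s _
      ext i
      simp
  rw [h, Finset.card_powersetCard, Finset.card_univ, Fintype.card_fin]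

private lemma sum_levels {Ω : Type*} (zs : List Ω) (ψ' : ℝ) (S : Finset (Fin zs.length → Bool)) :
    ∑ δ ∈ S, qdel ψ' zs δ
      = ∑ k ∈ Finset.range (zs.length + 1),
          ((S.filter fun δ => retained δ = k).card : ℝ)
            * (ψ' ^ (zs.length - k) * (1 - ψ') ^ k) := by
  classical
  rw [← Finset.sum_fiberwise_of_maps_to (g := retained) (t := Finset.range (zs.length + 1))
    (fun δ _ => Finset.mem_range.mpr (Nat.lt_succ_of_le (retained_le' δ)))]
  refine Finset.sum_congr rfl fun k _ => ?_
  rw [Finset.sum_congr rfl (fun δ hδ => ?_), Finset.sum_const, nsmul_eq_mul]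
  have hk : retained δ = k := (Finset.mem_filter.mp hδ).2
  simp [qdel, hk]

private lemma sum_binomPMF_eq_one (n : ℕ) (p : ℝ) :
    ∑ k ∈ Finset.range (n + 1), binomPMF n p k = 1 := by
  have h := add_pow (1 - p) p n
  simp only [sub_add_cancel, one_pow] at h
  calc ∑ k ∈ Finset.range (n + 1), binomPMF n p k
      = ∑ k ∈ Finset.range (n + 1), (1-p)^k * p^(n-k) * (n.choose k : ℝ) :=
        Finset.sum_congr rfl fun k _ => by unfold binomPMF; ring
    _ = 1 := h.symm

private lemma sum_qdel_eq_one {Ω : Type*} (zs : List Ω) (ψ' : ℝ) :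
    ∑ δ : Fin zs.length → Bool, qdel ψ' zs δ = 1 := by
  classical
  calc ∑ δ : Fin zs.length → Bool, qdel ψ' zs δ
      = ∑ k ∈ Finset.range (zs.length + 1),
          ((Finset.univ.filter fun δ : Fin zs.length → Bool => retained δ = k).card : ℝ)
            * (ψ' ^ (zs.length - k) * (1 - ψ') ^ k) := sum_levels zs ψ' Finset.univ
    _ = ∑ k ∈ Finset.range (zs.length + 1), binomPMF zs.length ψ' k := by
        refine Finset.sum_congr rfl fun k _ => ?_
        rw [card_retained]
        unfold binomPMF
        ring
    _ = 1 := sum_binomPMF_eq_one _ _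
private lemma key_embed {Ω : Type*} {zs w : List Ω} (hsub : zs.Sublist w) :
    ∃ E : (Fin zs.length → Bool) → (Fin w.length → Bool),
      Function.Injective E ∧
      (∀ δ, retained (E δ) = retained δ) ∧
      (∀ δ, applyDel w (E δ) = applyDel zs δ) := by
  classical
  obtain ⟨e, he⟩ := List.sublist_iff_exists_fin_orderEmbedding_get_eq.mp hsub
  refine ⟨fun δ => fun i => decide (∃ j, δ j = true ∧ e j = i), ?_, ?_, ?_⟩
  · intro δ δ' h
    funext j
    have h1 := congrFun h (e j)
    have h2 : (∃ j', δ j' = true ∧ e j' = e j) ↔ δ j = true := by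
      constructor
      · rintro ⟨j', hj', hej⟩; rwa [← e.injective hej]
      · intro hj; exact ⟨j, hj, rfl⟩
    have h2' : (∃ j', δ' j' = true ∧ e j' = e j) ↔ δ' j = true := by
      constructor
      · rintro ⟨j', hj', hej⟩; rwa [← e.injective hej]
      · intro hj; exact ⟨j, hj, rfl⟩
    simp only [decide_eq_decide] at h1
    rw [h2, h2'] at h1
    exact Bool.coe_iff_coe.mp h1
  · intro δ
    unfold retained
    have himg : (Finset.univ.filter fun i => decide (∃ j, δ j = true ∧ e j = i) = true)
        = (Finset.univ.filter fun j => δ j = true).image e := by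
      ext i
      simp only [Finset.mem_filter, Finset.mem_univ, true_and, Finset.mem_image,
        decide_eq_true_eq]
    rw [himg, Finset.card_image_of_injective _ e.injective]
  · intro δ
    rw [applyDel_eq_map, applyDel_eq_map]
    have hlist : ((List.finRange w.length).filter fun i => decide (∃ j, δ j = true ∧ e j = i))
        = ((List.finRange zs.length).filter fun j => δ j).map e := by
      refine (fun h1 h2 h3 => List.Perm.eq_of_sortedLE (List.sortedLE_iff_pairwise.mpr h2)
        (List.sortedLE_iff_pairwise.mpr h3) h1) ?_ ?_ ?_
      · rw [List.perm_ext_iff_of_nodup]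
        · intro i
          simp only [List.mem_filter, List.mem_finRange, true_and, List.mem_map,
            decide_eq_true_eq]
        · exact (List.nodup_finRange _).filter _
        · exact ((List.nodup_finRange _).filter _).map e.injective
      · exact List.Pairwise.sublist List.filter_sublist
          ((List.pairwise_lt_finRange _).imp le_of_lt)
      · exact List.Pairwise.map _ (fun a b h => (e.lt_iff_lt.mpr h).le)
          (List.Pairwise.sublist List.filter_sublist (List.pairwise_lt_finRange _))
    rw [hlist, List.map_map]
    exact List.map_congr_left fun j _ => (he j).symm
private lemma w_mono {ψ ψt : ℝ} (hψ0 : 0 < ψ) (hψt1 : ψt < 1) (hψt0 : 0 < ψt) (hψ1 : ψ < 1)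
    (hle : ψ ≤ ψt) {L j k : ℕ} (hjk : j ≤ k) (hk : k ≤ L) :
    ψt ^ (L - k) * (1 - ψt) ^ k * (ψ ^ (L - j) * (1 - ψ) ^ j)
      ≤ ψ ^ (L - k) * (1 - ψ) ^ k * (ψt ^ (L - j) * (1 - ψt) ^ j) := by
  obtain ⟨d, rfl⟩ : ∃ d, k = j + d := ⟨k - j, by omega⟩
  have e1 : L - j = (L - (j + d)) + d := by omega
  have h1t : (0:ℝ) ≤ 1 - ψt := by linarith
  have h1s : (0:ℝ) ≤ 1 - ψ := by linarith
  have hkey : ((1 - ψt) * ψ) ^ d ≤ ((1 - ψ) * ψt) ^ d := by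
    apply pow_le_pow_left₀ (mul_nonneg h1t hψ0.le)
    nlinarith
  have hc : 0 ≤ ψt ^ (L - (j + d)) * ψ ^ (L - (j + d)) * (1 - ψt) ^ j * (1 - ψ) ^ j :=
    mul_nonneg (mul_nonneg (mul_nonneg (pow_nonneg hψt0.le _) (pow_nonneg hψ0.le _))
      (pow_nonneg h1t _)) (pow_nonneg h1s _)
  calc ψt ^ (L - (j + d)) * (1 - ψt) ^ (j + d) * (ψ ^ (L - j) * (1 - ψ) ^ j)
      = (ψt ^ (L - (j + d)) * ψ ^ (L - (j + d)) * (1 - ψt) ^ j * (1 - ψ) ^ j)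
          * ((1 - ψt) * ψ) ^ d := by rw [e1, pow_add, pow_add, mul_pow]; ring
    _ ≤ (ψt ^ (L - (j + d)) * ψ ^ (L - (j + d)) * (1 - ψt) ^ j * (1 - ψ) ^ j)
          * ((1 - ψ) * ψt) ^ d := mul_le_mul_of_nonneg_left hkey hc
    _ = ψ ^ (L - (j + d)) * (1 - ψ) ^ (j + d) * (ψt ^ (L - j) * (1 - ψt) ^ j) := by
          rw [e1, pow_add, pow_add, mul_pow]; ring
private lemma core' (n : ℕ) {ψ ψt : ℝ}
    (hψ : ψ ∈ Set.Ioo (0:ℝ) 1) (hψt : ψt ∈ Set.Ioo (0:ℝ) 1) (hle : ψ ≤ ψt)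
    {H : ℕ} (hHL : H ≤ n) (ν : ℝ) (c : ℕ → ℝ)
    (hcnn : ∀ k, 0 ≤ c k) (hcle : ∀ k, c k ≤ (n.choose k : ℝ))
    (hν : ∑ k ∈ Finset.range (n+1), c k * (ψ ^ (n - k) * (1 - ψ) ^ k) ≤ ν) :
    ∑ k ∈ Finset.range (n+1), c k * (ψt ^ (n - k) * (1 - ψt) ^ k) ≤
      ∑ i ∈ Finset.range H, binomPMF n ψt i +
        (ψt ^ (n - H) * (1 - ψt) ^ H) / (ψ ^ (n - H) * (1 - ψ) ^ H)
          * (ν - ∑ j ∈ Finset.range H, binomPMF n ψ j) := by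
  classical
  obtain ⟨hψ0, hψ1⟩ := hψ
  obtain ⟨hψt0, hψt1⟩ := hψt
  set wp : ℕ → ℝ := fun k => ψ ^ (n - k) * (1 - ψ) ^ k with hwp
  set wt : ℕ → ℝ := fun k => ψt ^ (n - k) * (1 - ψt) ^ k with hwt
  have hwp_pos : ∀ k, 0 < wp k := fun k => mul_pos (pow_pos hψ0 _) (pow_pos (by linarith) _)
  have hwt_nonneg : ∀ k, 0 ≤ wt k := fun k =>
    le_of_lt (mul_pos (pow_pos hψt0 _) (pow_pos (by linarith) _))
  set D : ℝ := wt H / wp H with hD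
  have hD0 : 0 ≤ D := div_nonneg (hwt_nonneg H) (hwp_pos H).le
  have hbr : ∀ k, k ≤ H → D * wp k ≤ wt k := by
    intro k hk
    rw [hD, div_mul_eq_mul_div, div_le_iff₀ (hwp_pos H)]
    calc wt H * wp k ≤ wp H * wt k := w_mono hψ0 hψt1 hψt0 hψ1 hle hk hHL
      _ = wt k * wp H := by ring
  have hhi : ∀ k, H ≤ k → k ≤ n → wt k ≤ D * wp k := by
    intro k hk hkn
    rw [hD, div_mul_eq_mul_div, le_div_iff₀ (hwp_pos H)]
    calc wt k * wp H ≤ wp k * wt H := w_mono hψ0 hψt1 hψt0 hψ1 hle hk hkn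
      _ = wt H * wp k := by ring
  have hterm : ∀ k ∈ Finset.range (n+1),
      c k * wt k ≤ (if k < H then (n.choose k : ℝ) * (wt k - D * wp k) else 0)
        + D * (c k * wp k) := by
    intro k hk
    rw [Finset.mem_range] at hk
    by_cases hkH : k < H
    · rw [if_pos hkH]
      have h1 : c k * (wt k - D * wp k) ≤ (n.choose k : ℝ) * (wt k - D * wp k) :=
        mul_le_mul_of_nonneg_right (hcle k) (by linarith [hbr k hkH.le])
      have h2 : c k * wt k = c k * (wt k - D * wp k) + D * (c k * wp k) := by ring
      linarith
    · rw [if_neg hkH]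
      have h2 := mul_le_mul_of_nonneg_left (hhi k (by omega) (by omega)) (hcnn k)
      linarith
  have hsplit : ∑ k ∈ Finset.range (n+1),
      ((if k < H then (n.choose k : ℝ) * (wt k - D * wp k) else 0) + D * (c k * wp k))
      = (∑ k ∈ Finset.range H, (n.choose k : ℝ) * (wt k - D * wp k))
        + D * ∑ k ∈ Finset.range (n+1), c k * wp k := by
    rw [Finset.sum_add_distrib, ← Finset.mul_sum]
    congr 1
    rw [← Finset.sum_filter]
    congr 1
    ext k
    simp only [Finset.mem_filter, Finset.mem_range]
    omega
  have hfirst : ∑ k ∈ Finset.range H, (n.choose k : ℝ) * (wt k - D * wp k)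
      = ∑ i ∈ Finset.range H, binomPMF n ψt i - D * ∑ j ∈ Finset.range H, binomPMF n ψ j := by
    rw [Finset.mul_sum, ← Finset.sum_sub_distrib]
    refine Finset.sum_congr rfl fun k _ => ?_
    unfold binomPMF
    rw [hwt, hwp]
    ring
  calc ∑ k ∈ Finset.range (n+1), c k * wt k
      ≤ ∑ k ∈ Finset.range (n+1),
        ((if k < H then (n.choose k : ℝ) * (wt k - D * wp k) else 0) + D * (c k * wp k)) :=
        Finset.sum_le_sum hterm
    _ = (∑ k ∈ Finset.range H, (n.choose k : ℝ) * (wt k - D * wp k))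
        + D * ∑ k ∈ Finset.range (n+1), c k * wp k := hsplit
    _ ≤ (∑ k ∈ Finset.range H, (n.choose k : ℝ) * (wt k - D * wp k)) + D * ν := by
        have h3 : D * ∑ k ∈ Finset.range (n+1), c k * wp k ≤ D * ν :=
          mul_le_mul_of_nonneg_left hν hD0
        linarith
    _ = ∑ i ∈ Finset.range H, binomPMF n ψt i
        + D * (ν - ∑ j ∈ Finset.range H, binomPMF n ψ j) := by rw [hfirst]; ring

private lemma core {Ω : Type*} (zs : List Ω) {ψ ψt : ℝ}
    (hψ : ψ ∈ Set.Ioo (0:ℝ) 1) (hψt : ψt ∈ Set.Ioo (0:ℝ) 1) (hle : ψ ≤ ψt)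
    {H : ℕ} (hHL : H ≤ zs.length) (ν : ℝ)
    (S : Finset (Fin zs.length → Bool))
    (hν : ∑ δ ∈ S, qdel ψ zs δ ≤ ν) :
    ∑ δ ∈ S, qdel ψt zs δ ≤
      ∑ i ∈ Finset.range H, binomPMF zs.length ψt i +
        (ψt ^ (zs.length - H) * (1 - ψt) ^ H) / (ψ ^ (zs.length - H) * (1 - ψ) ^ H)
          * (ν - ∑ j ∈ Finset.range H, binomPMF zs.length ψ j) := by
  classical
  rw [sum_levels zs ψ S] at hν
  rw [sum_levels zs ψt S]
  refine core' zs.length hψ hψt hle hHL ν _ (fun k => Nat.cast_nonneg _) (fun k => ?_) hν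
  have h := Finset.card_le_card (Finset.filter_subset_filter (fun δ => retained δ = k)
    (Finset.subset_univ S))
  rw [← card_retained zs.length k]
  exact_mod_cast h
private lemma le_gceil {a v : ℝ} (hv : 0 < v) : a ≤ gceil a v := by
  unfold gceil
  calc a = v * (a / v) := by field_simp
    _ ≤ v * (⌈a / v⌉ : ℤ) := mul_le_mul_of_nonneg_left (Int.le_ceil _) hv.le

private lemma qdel_embed {Ω : Type*} (zs w : List Ω) (hlen : zs.length ≤ w.length) (ψ' : ℝ)
    (δ : Fin zs.length → Bool) (ε : Fin w.length → Bool) (hret : retained ε = retained δ) :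
    qdel ψ' w ε = ψ' ^ (w.length - zs.length) * qdel ψ' zs δ := by
  have hrl := retained_le' δ
  have hexp : w.length - retained ε = (w.length - zs.length) + (zs.length - retained δ) := by
    rw [hret]; omega
  unfold qdel
  rw [hret] at hexp ⊢
  rw [hexp, pow_add]
  ring

private lemma ratio_le {ψ ψt : ℝ} (hψ : ψ ∈ Set.Ioo (0:ℝ) 1) (hψt : ψt ∈ Set.Ioo (0:ℝ) 1)
    (hle : ψ ≤ ψt) {L k H : ℕ} (hkH : k ≤ H) (hHL : H ≤ L) :
    (ψt ^ (L - H) * (1 - ψt) ^ H) / (ψ ^ (L - H) * (1 - ψ) ^ H) * (ψ ^ (L - k) * (1 - ψ) ^ k)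
      ≤ ψt ^ (L - k) * (1 - ψt) ^ k := by
  obtain ⟨hψ0, hψ1⟩ := hψ
  obtain ⟨hψt0, hψt1⟩ := hψt
  have hpos : 0 < ψ ^ (L - H) * (1 - ψ) ^ H :=
    mul_pos (pow_pos hψ0 _) (pow_pos (by linarith) _)
  rw [div_mul_eq_mul_div, div_le_iff₀ hpos]
  calc ψt ^ (L - H) * (1 - ψt) ^ H * (ψ ^ (L - k) * (1 - ψ) ^ k)
      ≤ ψ ^ (L - H) * (1 - ψ) ^ H * (ψt ^ (L - k) * (1 - ψt) ^ k) :=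
        w_mono hψ0 hψt1 hψt0 hψ1 hle hkH hHL
    _ = ψt ^ (L - k) * (1 - ψt) ^ k * (ψ ^ (L - H) * (1 - ψ) ^ H) := by ring
/-- upper bound on the smoothed class probability at a perturbed input,
case `ψ ≤ ψ̃`. -/
theorem stmt13 {Ω Y : Type*} [DecidableEq Y] (x xt zs : List Ω)
    (hz : IsLCS zs x xt) (L : ℕ) (hL : L = zs.length)
    (ψ ψt : ℝ) (hψ : ψ ∈ Set.Ioo (0 : ℝ) 1) (hψt : ψt ∈ Set.Ioo (0 : ℝ) 1)
    (hle : ψ ≤ ψt)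
    (f : List Ω → Y) (y : Y)
    (μ : ℝ) (hμ : μ = smoothedProb f y ψ x)
    (H : ℕ)
    (hH : H = sInf {h | h ≤ L ∧ μ ≤ ∑ i ∈ Finset.range (h + 1), binomPMF L ψ i}) :
    smoothedProb f y ψt xt ≤
      ψt ^ (xt.length - L) / ψ ^ (x.length - L) *
        (∑ i ∈ Finset.range H, binomPMF L ψt i +
          binomPMF L ψt H *
            gceil ((μ - ∑ j ∈ Finset.range H, binomPMF L ψ j) / binomPMF L ψ H)
              ((L.choose H : ℝ)⁻¹)) +
      1 - ψt ^ (xt.length - L) := by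
  classical
  subst hL
  obtain ⟨hzx, hzxt, -⟩ := hz
  obtain ⟨hψ0, hψ1⟩ := hψ
  obtain ⟨hψt0, hψt1⟩ := hψt
  have hψ' : ψ ∈ Set.Ioo (0:ℝ) 1 := ⟨hψ0, hψ1⟩
  have hψt' : ψt ∈ Set.Ioo (0:ℝ) 1 := ⟨hψt0, hψt1⟩
  have hLx : zs.length ≤ x.length := hzx.length_le
  have hLxt : zs.length ≤ xt.length := hzxt.length_le
  set Lz := zs.length with hLz
  set a := x.length - Lz with ha
  set b := xt.length - Lz with hb
  -- μ ≤ 1 and H ≤ Lz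
  have hμ1 : μ ≤ 1 := by
    rw [hμ]
    unfold smoothedProb
    calc ∑ ε : Fin x.length → Bool, score f y ψ x ε
        ≤ ∑ ε : Fin x.length → Bool, qdel ψ x ε :=
          Finset.sum_le_sum fun ε _ => score_le_qdel f y hψ' x ε
      _ = 1 := sum_qdel_eq_one x ψ
  have hHL : H ≤ Lz := by
    rw [hH]
    exact Nat.sInf_le ⟨le_refl _, by rw [sum_binomPMF_eq_one]; exact hμ1⟩
  -- abbreviations
  set S₀ : Finset (Fin Lz → Bool) :=
    Finset.univ.filter (fun δ => f (applyDel zs δ) = y) with hS₀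
  set Q : ℝ := ∑ δ ∈ S₀, qdel ψt zs δ with hQ
  set A : ℝ := ∑ i ∈ Finset.range H, binomPMF Lz ψt i with hA
  set P : ℝ := ∑ j ∈ Finset.range H, binomPMF Lz ψ j with hP
  set D : ℝ := (ψt ^ (Lz - H) * (1 - ψt) ^ H) / (ψ ^ (Lz - H) * (1 - ψ) ^ H) with hD
  have hpa0 : (0:ℝ) < ψ ^ a := pow_pos hψ0 a
  have hpa1 : ψ ^ a ≤ 1 := pow_le_one₀ hψ0.le hψ1.le
  have hpb0 : (0:ℝ) ≤ ψt ^ b := (pow_pos hψt0 b).le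
  -- Step 1 : budget on the x-side
  have hbudget : ∑ δ ∈ S₀, qdel ψ zs δ ≤ μ / ψ ^ a := by
    obtain ⟨E, hEinj, hEret, hEapp⟩ := key_embed hzx
    have h1 : ∑ δ ∈ S₀, score f y ψ x (E δ) = ψ ^ a * ∑ δ ∈ S₀, qdel ψ zs δ := by
      rw [Finset.mul_sum]
      refine Finset.sum_congr rfl fun δ hδ => ?_
      have hy : f (applyDel x (E δ)) = y := by
        rw [hEapp δ]
        exact (Finset.mem_filter.mp hδ).2
      unfold score
      rw [if_pos hy, mul_one, qdel_embed zs x hLx ψ δ (E δ) (hEret δ)]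
    have h2 : ∑ δ ∈ S₀, score f y ψ x (E δ) ≤ μ := by
      rw [hμ]
      unfold smoothedProb
      rw [← Finset.sum_image (g := E)
        (fun δ _ δ' _ h => hEinj h)]
      exact Finset.sum_le_sum_of_subset_of_nonneg (Finset.subset_univ _)
        (fun ε _ _ => score_nonneg f y hψ' x ε)
    rw [le_div_iff₀ hpa0]
    calc (∑ δ ∈ S₀, qdel ψ zs δ) * ψ ^ a = ψ ^ a * ∑ δ ∈ S₀, qdel ψ zs δ := by ring
      _ = ∑ δ ∈ S₀, score f y ψ x (E δ) := h1.symm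
      _ ≤ μ := h2
  -- Step 2 : decomposition on the xt-side
  have hstep2 : smoothedProb f y ψt xt ≤ ψt ^ b * Q + (1 - ψt ^ b) := by
    obtain ⟨Et, hEtinj, hEtret, hEtapp⟩ := key_embed hzxt
    set T : Finset (Fin xt.length → Bool) := Finset.univ.image Et with hT
    have himg_q : ∑ ε ∈ T, qdel ψt xt ε = ψt ^ b := by
      rw [hT, Finset.sum_image (fun δ _ δ' _ h => hEtinj h)]
      calc ∑ δ : Fin Lz → Bool, qdel ψt xt (Et δ)
          = ∑ δ : Fin Lz → Bool, ψt ^ b * qdel ψt zs δ :=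
            Finset.sum_congr rfl fun δ _ => qdel_embed zs xt hLxt ψt δ (Et δ) (hEtret δ)
        _ = ψt ^ b * ∑ δ : Fin Lz → Bool, qdel ψt zs δ := by rw [Finset.mul_sum]
        _ = ψt ^ b := by rw [sum_qdel_eq_one]; ring
    have himg_s : ∑ ε ∈ T, score f y ψt xt ε = ψt ^ b * Q := by
      rw [hT, Finset.sum_image (fun δ _ δ' _ h => hEtinj h)]
      rw [hQ, hS₀, Finset.sum_filter, Finset.mul_sum]
      refine Finset.sum_congr rfl fun δ _ => ?_
      unfold score
      rw [qdel_embed zs xt hLxt ψt δ (Et δ) (hEtret δ), hEtapp δ]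
      by_cases hc : f (applyDel zs δ) = y
      · rw [if_pos hc, if_pos hc]; ring
      · rw [if_neg hc, if_neg hc]; ring
    have hrest : ∑ ε ∈ Finset.univ \ T, score f y ψt xt ε ≤ 1 - ψt ^ b := by
      calc ∑ ε ∈ Finset.univ \ T, score f y ψt xt ε
          ≤ ∑ ε ∈ Finset.univ \ T, qdel ψt xt ε :=
            Finset.sum_le_sum fun ε _ => score_le_qdel f y hψt' xt ε
        _ = (∑ ε : Fin xt.length → Bool, qdel ψt xt ε) - ∑ ε ∈ T, qdel ψt xt ε :=
            Finset.sum_sdiff_eq_sub (Finset.subset_univ T)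
        _ = 1 - ψt ^ b := by rw [sum_qdel_eq_one, himg_q]
    have hdecomp : smoothedProb f y ψt xt
        = ∑ ε ∈ Finset.univ \ T, score f y ψt xt ε + ∑ ε ∈ T, score f y ψt xt ε := by
      unfold smoothedProb
      exact (Finset.sum_sdiff (Finset.subset_univ T)).symm
    rw [hdecomp, himg_s]
    linarith
  -- Step 3 : core Neyman-Pearson bound
  have hcore : Q ≤ A + D * (μ / ψ ^ a - P) :=
    core zs hψ' hψt' hle hHL (μ / ψ ^ a) S₀ hbudget
  -- Step 4 : arithmetic
  have hC : (0:ℝ) < (Lz.choose H : ℝ) := by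
    exact_mod_cast Nat.choose_pos hHL
  have hCinv : (0:ℝ) < ((Lz.choose H : ℝ))⁻¹ := inv_pos.mpr hC
  set G : ℝ := gceil ((μ - P) / binomPMF Lz ψ H) ((Lz.choose H : ℝ)⁻¹) with hG
  have hBtH0 : 0 ≤ binomPMF Lz ψt H := by
    unfold binomPMF
    have h1 : (0:ℝ) ≤ 1 - ψt := by linarith
    positivity
  have hwpH0 : (0:ℝ) < ψ ^ (Lz - H) * (1 - ψ) ^ H :=
    mul_pos (pow_pos hψ0 _) (pow_pos (by linarith) _)
  have hEqD : binomPMF Lz ψt H * ((μ - P) / binomPMF Lz ψ H) = D * (μ - P) := by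
    unfold binomPMF
    rw [hD]
    have h1 : ((1:ℝ) - ψ) ^ H ≠ 0 := ne_of_gt (pow_pos (by linarith) H)
    have h2 : ψ ^ (Lz - H) ≠ 0 := ne_of_gt (pow_pos hψ0 _)
    field_simp
  have hX : D * (μ - P) ≤ binomPMF Lz ψt H * G := by
    rw [← hEqD]
    exact mul_le_mul_of_nonneg_left (le_gceil hCinv) hBtH0
  have hDBi : ∀ i ∈ Finset.range H, D * binomPMF Lz ψ i ≤ binomPMF Lz ψt i := by
    intro i hi
    rw [Finset.mem_range] at hi
    have h := ratio_le hψ' hψt' hle (k := i) (H := H) (L := Lz) hi.le hHL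
    calc D * binomPMF Lz ψ i
        = (Lz.choose i : ℝ) * (D * (ψ ^ (Lz - i) * (1 - ψ) ^ i)) := by
          unfold binomPMF; rw [hD]; ring
      _ ≤ (Lz.choose i : ℝ) * (ψt ^ (Lz - i) * (1 - ψt) ^ i) := by
          refine mul_le_mul_of_nonneg_left ?_ (Nat.cast_nonneg _)
          rw [hD]; exact h
      _ = binomPMF Lz ψt i := by unfold binomPMF; ring
  have hSP : D * P ≤ A := by
    rw [hP, hA, Finset.mul_sum]
    exact Finset.sum_le_sum hDBi
  have hD0 : 0 ≤ D := by
    rw [hD]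
    have h1 : (0:ℝ) ≤ 1 - ψt := by linarith
    have h2 : (0:ℝ) ≤ 1 - ψ := by linarith
    positivity
  have hQ2 : ψ ^ a * Q ≤ A + binomPMF Lz ψt H * G := by
    have h1 : ψ ^ a * Q ≤ ψ ^ a * A + (D * μ - ψ ^ a * (D * P)) := by
      calc ψ ^ a * Q ≤ ψ ^ a * (A + D * (μ / ψ ^ a - P)) :=
            mul_le_mul_of_nonneg_left hcore hpa0.le
        _ = ψ ^ a * A + (D * μ - ψ ^ a * (D * P)) := by field_simp
    have h2 : ψ ^ a * A + (D * μ - ψ ^ a * (D * P)) ≤ A + D * μ - D * P := by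
      nlinarith [mul_nonneg (sub_nonneg.mpr hpa1) (sub_nonneg.mpr hSP)]
    have h3 : D * (μ - P) = D * μ - D * P := by ring
    linarith
  have h5 : ψt ^ b * Q ≤ ψt ^ b / ψ ^ a * (A + binomPMF Lz ψt H * G) := by
    rw [div_mul_eq_mul_div, le_div_iff₀ hpa0]
    calc ψt ^ b * Q * ψ ^ a = ψt ^ b * (ψ ^ a * Q) := by ring
      _ ≤ ψt ^ b * (A + binomPMF Lz ψt H * G) := mul_le_mul_of_nonneg_left hQ2 hpb0
  linarith
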